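/- Let g = g₁ + g₂ where g₁ : ℝⁿ → ℝ is convex and L-Lipschitz and g₂ : ℝⁿ → ℝ is any measurable function, with ∫ exp(−g₁(x) − g₂(x)) dx = 1. Let λ > 0, let g₁^λ be the Moreau–Yosida envelope of g₁, let Z_λ = ∫ exp(−g₁^λ(z) − g₂(z)) dz (assumed finite), and set π(x) = exp(−g₁(x) − g₂(x)) and π^λ(x) = exp(−g₁^λ(x) − g₂(x))/Z_λ. Then for any f : ℝⁿ → ℝ integrable with respect to both π(x)dx and π^λ(x)dx, one has |∫ f π^λ dx − ∫ f π dx| ≤ (exp(L²λ) − 1) ∫ |f| π dx, and likewise |∫ f π^λ dx − ∫ f π dx| ≤ (exp(L²λ) − 1) ∫ |f| π^λ dx. -/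

import Mathlib

open MeasureTheory

/-- The Moreau–Yosida envelope of `g` with parameter `lam`. -/
noncomputable def mye {n : ℕ} (g : EuclideanSpace ℝ (Fin n) → ℝ) (lam : ℝ)
    (x : EuclideanSpace ℝ (Fin n)) : ℝ :=
  ⨅ z : EuclideanSpace ℝ (Fin n), (g z + ‖x - z‖ ^ 2 / (2 * lam))

lemma term_lb {n : ℕ} (g₁ : EuclideanSpace ℝ (Fin n) → ℝ) (L lam : ℝ)
    (hLip : ∀ x y, |g₁ x - g₁ y| ≤ L * ‖x - y‖) (hlam : 0 < lam)
    (x z : EuclideanSpace ℝ (Fin n)) :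
    g₁ x - L ^ 2 * lam / 2 ≤ g₁ z + ‖x - z‖ ^ 2 / (2 * lam) := by
  have h := (abs_le.mp (hLip x z)).2
  have ht : (0:ℝ) ≤ ‖x - z‖ := norm_nonneg _
  have hq : L * ‖x - z‖ - L ^ 2 * lam / 2 ≤ ‖x - z‖ ^ 2 / (2 * lam) := by
    rw [le_div_iff₀ (by positivity)]
    nlinarith [sq_nonneg (‖x - z‖ - L * lam)]
  linarith

lemma mye_le {n : ℕ} (g₁ : EuclideanSpace ℝ (Fin n) → ℝ) (L lam : ℝ)
    (hLip : ∀ x y, |g₁ x - g₁ y| ≤ L * ‖x - y‖) (hlam : 0 < lam)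
    (x : EuclideanSpace ℝ (Fin n)) : mye g₁ lam x ≤ g₁ x := by
  have := ciInf_le (f := fun z => g₁ z + ‖x - z‖ ^ 2 / (2 * lam))
    ⟨g₁ x - L ^ 2 * lam / 2, fun y hy => by
      obtain ⟨z, rfl⟩ := hy; exact term_lb g₁ L lam hLip hlam x z⟩ x
  simpa [mye] using this

lemma le_mye {n : ℕ} (g₁ : EuclideanSpace ℝ (Fin n) → ℝ) (L lam : ℝ)
    (hLip : ∀ x y, |g₁ x - g₁ y| ≤ L * ‖x - y‖) (hlam : 0 < lam)
    (x : EuclideanSpace ℝ (Fin n)) : g₁ x - L ^ 2 * lam / 2 ≤ mye g₁ lam x :=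
  le_ciInf (term_lb g₁ L lam hLip hlam x)

lemma key (p q e : ℝ) (hp : 0 < p) (he : 1 ≤ e) (h1 : p ≤ e * q) (h2 : q ≤ e * p) :
    |q - p| ≤ (e ^ 2 - 1) * p ∧ |q - p| ≤ (e ^ 2 - 1) * q := by
  have hq : 0 < q := by nlinarith
  constructor <;> rw [abs_le] <;> constructor <;>
    nlinarith [mul_nonneg (mul_nonneg hp.le (sub_nonneg.2 he)) (sub_nonneg.2 he),
      mul_nonneg (mul_nonneg hq.le (sub_nonneg.2 he)) (sub_nonneg.2 he),
      mul_nonneg hp.le (sub_nonneg.2 he), mul_nonneg hq.le (sub_nonneg.2 he)]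

theorem stmt_5 {n : ℕ} (g₁ g₂ : EuclideanSpace ℝ (Fin n) → ℝ) (L lam : ℝ)
    (hconv : ConvexOn ℝ Set.univ g₁)
    (hLip : ∀ x y, |g₁ x - g₁ y| ≤ L * ‖x - y‖)
    (hg₂ : Measurable g₂)
    (hlam : 0 < lam)
    (hnorm : ∫ x : EuclideanSpace ℝ (Fin n), Real.exp (-g₁ x - g₂ x) = 1)
    (hZ : Integrable (fun z : EuclideanSpace ℝ (Fin n) =>
      Real.exp (-(mye g₁ lam z) - g₂ z)))
    (f : EuclideanSpace ℝ (Fin n) → ℝ)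
    (hf : Integrable (fun x => f x * Real.exp (-g₁ x - g₂ x)))
    (hflam : Integrable (fun x =>
      f x * (Real.exp (-(mye g₁ lam x) - g₂ x) /
        ∫ z : EuclideanSpace ℝ (Fin n), Real.exp (-(mye g₁ lam z) - g₂ z)))) :
    |(∫ x, f x * (Real.exp (-(mye g₁ lam x) - g₂ x) /
          ∫ z : EuclideanSpace ℝ (Fin n), Real.exp (-(mye g₁ lam z) - g₂ z))) -
        ∫ x, f x * Real.exp (-g₁ x - g₂ x)| ≤
      (Real.exp (L ^ 2 * lam) - 1) * ∫ x, |f x| * Real.exp (-g₁ x - g₂ x) ∧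
    |(∫ x, f x * (Real.exp (-(mye g₁ lam x) - g₂ x) /
          ∫ z : EuclideanSpace ℝ (Fin n), Real.exp (-(mye g₁ lam z) - g₂ z))) -
        ∫ x, f x * Real.exp (-g₁ x - g₂ x)| ≤
      (Real.exp (L ^ 2 * lam) - 1) *
        ∫ x, |f x| * (Real.exp (-(mye g₁ lam x) - g₂ x) /
          ∫ z : EuclideanSpace ℝ (Fin n), Real.exp (-(mye g₁ lam z) - g₂ z)) := by
  set Z : ℝ := ∫ z : EuclideanSpace ℝ (Fin n), Real.exp (-(mye g₁ lam z) - g₂ z) with hZdef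
  set π : EuclideanSpace ℝ (Fin n) → ℝ := fun x => Real.exp (-g₁ x - g₂ x) with hπdef
  set q : EuclideanSpace ℝ (Fin n) → ℝ :=
    fun x => Real.exp (-(mye g₁ lam x) - g₂ x) / Z with hqdef
  set e : ℝ := Real.exp (L ^ 2 * lam / 2) with hedef
  have he1 : 1 ≤ e := Real.one_le_exp (by positivity)
  have hee : e ^ 2 = Real.exp (L ^ 2 * lam) := by
    rw [hedef, ← Real.exp_nat_mul]
    ring_nf
  -- integrability of π
  have hπint : Integrable π := by
    by_contra h
    rw [integral_undef h] at hnorm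
    norm_num at hnorm
  have hπpos : ∀ x, 0 < π x := fun x => Real.exp_pos _
  -- pointwise comparisons of the two densities (unnormalized)
  have hle1 : ∀ x, π x ≤ Real.exp (-(mye g₁ lam x) - g₂ x) := fun x =>
    Real.exp_le_exp.2 (by linarith [mye_le g₁ L lam hLip hlam x])
  have hle2 : ∀ x, Real.exp (-(mye g₁ lam x) - g₂ x) ≤ e * π x := fun x => by
    rw [hedef, hπdef, ← Real.exp_add]
    exact Real.exp_le_exp.2 (by linarith [le_mye g₁ L lam hLip hlam x])
  -- bounds on Z
  have hZ1 : 1 ≤ Z := by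
    rw [← hnorm]
    exact integral_mono hπint hZ hle1
  have hZ2 : Z ≤ e := by
    calc Z ≤ ∫ x, e * π x := integral_mono hZ (hπint.const_mul e) hle2
    _ = e := by rw [integral_const_mul, hnorm, mul_one]
  have hZpos : 0 < Z := lt_of_lt_of_le one_pos hZ1
  -- pointwise bounds relating q and π
  have hqb : ∀ x, π x ≤ e * q x ∧ q x ≤ e * π x := by
    intro x
    constructor
    · rw [hqdef]
      rw [mul_div_assoc'] -- e * (A / Z) = (e * A) / Z
      rw [le_div_iff₀ hZpos]
      calc π x * Z ≤ π x * e := by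
            exact mul_le_mul_of_nonneg_left hZ2 (hπpos x).le
        _ = e * π x := mul_comm _ _
        _ ≤ e * Real.exp (-(mye g₁ lam x) - g₂ x) :=
            mul_le_mul_of_nonneg_left (hle1 x) (by linarith)
    · rw [hqdef]
      calc Real.exp (-(mye g₁ lam x) - g₂ x) / Z
          ≤ Real.exp (-(mye g₁ lam x) - g₂ x) / 1 := by
            apply div_le_div_of_nonneg_left _ _ hZ1 <;> positivity
        _ = Real.exp (-(mye g₁ lam x) - g₂ x) := div_one _
        _ ≤ e * π x := hle2 x
  have hkey := fun x => key (π x) (q x) e (hπpos x) he1 (hqb x).1 (hqb x).2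
  -- |∫ f q - ∫ f π| ≤ ∫ |f| |q - π|
  have hdiff : Integrable (fun x => f x * q x - f x * π x) := hflam.sub hf
  have habs : |(∫ x, f x * q x) - ∫ x, f x * π x| ≤ ∫ x, |f x| * |q x - π x| := by
    rw [← integral_sub hflam hf]
    calc |∫ x, (f x * q x - f x * π x)| ≤ ∫ x, |f x * q x - f x * π x| :=
          (by simpa using norm_integral_le_integral_norm (fun x => f x * q x - f x * π x))
      _ = ∫ x, |f x| * |q x - π x| := by
          congr 1; funext x; rw [← mul_sub, abs_mul]
  have hint_absdiff : Integrable (fun x => |f x| * |q x - π x|) := by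
    have := hdiff.abs
    refine this.congr ?_
    filter_upwards with x
    rw [← mul_sub, abs_mul]
  -- integrable |f| * π and |f| * q
  have hfπ : Integrable (fun x => |f x| * π x) := by
    have := hf.abs
    refine this.congr ?_
    filter_upwards with x
    rw [abs_mul, abs_of_pos (hπpos x)]
  have hfq : Integrable (fun x => |f x| * q x) := by
    have := hflam.abs
    refine this.congr ?_
    filter_upwards with x
    rw [abs_mul, abs_of_pos (show (0:ℝ) < Real.exp (-(mye g₁ lam x) - g₂ x) / Z from
      div_pos (Real.exp_pos _) hZpos)]
  have hqpos : ∀ x, 0 < q x := fun x => div_pos (Real.exp_pos _) hZpos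
  constructor
  · calc |(∫ x, f x * q x) - ∫ x, f x * π x| ≤ ∫ x, |f x| * |q x - π x| := habs
      _ ≤ ∫ x, (e ^ 2 - 1) * (|f x| * π x) := by
          apply integral_mono hint_absdiff (hfπ.const_mul _)
          intro x
          have := (hkey x).1
          calc |f x| * |q x - π x| ≤ |f x| * ((e ^ 2 - 1) * π x) :=
                mul_le_mul_of_nonneg_left this (abs_nonneg _)
            _ = (e ^ 2 - 1) * (|f x| * π x) := by ring
      _ = (e ^ 2 - 1) * ∫ x, |f x| * π x := integral_const_mul _ _
      _ = (Real.exp (L ^ 2 * lam) - 1) * ∫ x, |f x| * π x := by rw [hee]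
  · calc |(∫ x, f x * q x) - ∫ x, f x * π x| ≤ ∫ x, |f x| * |q x - π x| := habs
      _ ≤ ∫ x, (e ^ 2 - 1) * (|f x| * q x) := by
          apply integral_mono hint_absdiff (hfq.const_mul _)
          intro x
          have := (hkey x).2
          calc |f x| * |q x - π x| ≤ |f x| * ((e ^ 2 - 1) * q x) :=
                mul_le_mul_of_nonneg_left this (abs_nonneg _)
            _ = (e ^ 2 - 1) * (|f x| * q x) := by ring
      _ = (e ^ 2 - 1) * ∫ x, |f x| * q x := integral_const_mul _ _
      _ = (Real.exp (L ^ 2 * lam) - 1) * ∫ x, |f x| * q x := by rw [hee]
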